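/- (Todd's lemma) For integers d_1,...,d_k and p ≥ 0, W_p^{(k)}(d_1−1,...,d_k−1) = Σ_{i=0}^{p} (−1)^{p−i} binom(k+p−1, p−i) W_i^{(k)}(d_1,...,d_k). -/

import Mathlib

/-- The Wronski (complete homogeneous symmetric) function
`W k δ x = ∑_{i₁+⋯+i_k = δ} x₁^{i₁} ⋯ x_k^{i_k}`. -/
def W {R : Type*} [CommSemiring R] (k δ : ℕ) (x : Fin k → R) : R :=
  ∑ c ∈ Finset.filter (fun c => ∑ i, c i = δ)
      (Fintype.piFinset fun _ : Fin k => Finset.range (δ + 1)),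
    ∏ i, x i ^ c i


open Finset

lemma W_eq {R : Type*} [CommSemiring R] (k δ : ℕ) (x : Fin k → R) :
    W k δ x = ∑ c ∈ finAntidiagonal k δ, ∏ i, x i ^ c i := by
  unfold W
  congr 1
  ext c
  simp only [mem_filter, Fintype.mem_piFinset, mem_range, mem_finAntidiagonal]
  constructor
  · exact fun h => h.2
  · intro h
    refine ⟨fun i => Nat.lt_succ_of_le (h ▸ ?_), h⟩
    exact Finset.single_le_sum (fun j _ => Nat.zero_le _) (mem_univ i)

lemma sum_finAntidiagonal_succ {M : Type*} [AddCommMonoid M] (k m : ℕ)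
    (f : (Fin (k + 1) → ℕ) → M) :
    ∑ e ∈ finAntidiagonal (k + 1) m, f e
      = ∑ p ∈ antidiagonal m, ∑ e ∈ finAntidiagonal k p.2, f (Fin.cons p.1 e) := by
  rw [Finset.sum_sigma']
  refine Finset.sum_nbij' (fun e => ⟨(e 0, ∑ i, Fin.tail e i), Fin.tail e⟩)
    (fun x => Fin.cons x.1.1 x.2) ?_ ?_ ?_ ?_ ?_
  · intro e he
    simp only [mem_finAntidiagonal] at he
    simp only [Finset.mem_sigma, Finset.HasAntidiagonal.mem_antidiagonal, mem_finAntidiagonal]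
    exact ⟨by rw [← he, Fin.sum_univ_succ]; rfl, by first | rfl | trivial⟩
  · rintro ⟨p, e⟩ hx
    simp only [Finset.mem_sigma, Finset.HasAntidiagonal.mem_antidiagonal, mem_finAntidiagonal] at hx
    simp only [mem_finAntidiagonal, Fin.sum_univ_succ, Fin.cons_zero, Fin.cons_succ]
    rw [show ∑ i : Fin k, e i = p.2 from hx.2]
    exact hx.1
  · intro e _; exact Fin.cons_self_tail e
  · rintro ⟨p, e⟩ hx
    simp only [Finset.mem_sigma, Finset.HasAntidiagonal.mem_antidiagonal, mem_finAntidiagonal] at hx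
    simp only [Fin.cons_zero, Fin.tail_cons, Sigma.mk.inj_iff, heq_eq_eq, and_true]
    rw [hx.2]
  · intro e _
    rw [Fin.cons_self_tail]

open Finset PowerSeries

lemma choose_convolution (a c m : ℕ) :
    ∑ q ∈ antidiagonal m, (a + q.1).choose a * (c + q.2).choose c
      = (a + c + 1 + m).choose m := by
  have hu : (invOneSubPow ℤ (a + 1)) * (invOneSubPow ℤ (c + 1))
      = invOneSubPow ℤ (a + c + 1 + 1) := by
    rw [invOneSubPow_eq_inv_one_sub_pow, invOneSubPow_eq_inv_one_sub_pow,
      invOneSubPow_eq_inv_one_sub_pow, ← pow_add]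
    ring_nf
  have h := congrArg (fun u : (PowerSeries ℤ)ˣ => PowerSeries.coeff m u.val) hu
  simp only [Units.val_mul, PowerSeries.coeff_mul,
    invOneSubPow_val_succ_eq_mk_add_choose, coeff_mk] at h
  have h2 : ∑ q ∈ antidiagonal m, ((a + q.1).choose a * (c + q.2).choose c : ℤ)
      = ((a + c + 1 + m).choose (a + c + 1) : ℤ) := by
    rw [← h]
  have h3 : ((∑ q ∈ antidiagonal m, (a + q.1).choose a * (c + q.2).choose c : ℕ) : ℤ)
      = ((a + c + 1 + m).choose (a + c + 1) : ℤ) := by push_cast; exact h2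
  have h4 := Nat.cast_injective (R := ℤ) h3
  rw [h4, Nat.choose_symm_add]

lemma finAntidiagonal_one (m : ℕ) : finAntidiagonal 1 m = {![m]} := by
  ext f
  simp [mem_finAntidiagonal, Fin.sum_univ_one, funext_iff, Fin.forall_fin_one]

lemma lemmaG : ∀ (k : ℕ) (b : Fin (k + 1) → ℕ) (m : ℕ),
    ∑ e ∈ finAntidiagonal (k + 1) m, ∏ j, (b j + e j).choose (e j)
      = (∑ j, b j + k + m).choose m := by
  intro k
  induction k with
  | zero =>
    intro b m
    rw [finAntidiagonal_one, sum_singleton]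
    simp [Fin.prod_univ_one, Fin.sum_univ_one, Nat.choose_symm_add]
  | succ k ih =>
    intro b m
    rw [sum_finAntidiagonal_succ]
    have step : ∀ p ∈ antidiagonal m,
        ∑ e ∈ finAntidiagonal (k + 1) p.2,
          ∏ j : Fin (k + 2), (b j + (Fin.cons p.1 e : Fin (k + 2) → ℕ) j).choose
            ((Fin.cons p.1 e : Fin (k + 2) → ℕ) j)
        = (b 0 + p.1).choose (b 0) *
            ((∑ j : Fin (k + 1), b j.succ + k) + p.2).choose
              (∑ j : Fin (k + 1), b j.succ + k) := by
      intro p hp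
      have : ∀ e ∈ finAntidiagonal (k + 1) p.2,
          ∏ j : Fin (k + 2), (b j + (Fin.cons p.1 e : Fin (k + 2) → ℕ) j).choose
            ((Fin.cons p.1 e : Fin (k + 2) → ℕ) j)
          = (b 0 + p.1).choose (b 0) *
              ∏ j : Fin (k + 1), (b j.succ + e j).choose (e j) := by
        intro e _
        rw [Fin.prod_univ_succ]
        simp [Fin.cons_zero, Fin.cons_succ, Nat.choose_symm_add]
      rw [Finset.sum_congr rfl this, ← Finset.mul_sum, ih (fun j => b j.succ) p.2]
      congr 1
      exact Nat.choose_symm_add.symm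
    rw [Finset.sum_congr rfl step, choose_convolution]
    congr 1
    conv_rhs => rw [Fin.sum_univ_succ]
    omega

lemma reindex {R : Type*} [CommRing R] (k p : ℕ)
    (F : (Fin k → ℕ) → (Fin k → ℕ) → R) :
    ∑ c ∈ finAntidiagonal k p,
        ∑ b ∈ Fintype.piFinset (fun i => range (c i + 1)), F b (fun i => c i - b i)
      = ∑ q ∈ antidiagonal p,
          ∑ z ∈ finAntidiagonal k q.1 ×ˢ finAntidiagonal k q.2, F z.1 z.2 := by
  rw [Finset.sum_sigma', Finset.sum_sigma']
  refine Finset.sum_nbij'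
    (fun x => ⟨(∑ i, x.2 i, ∑ i, (x.1 i - x.2 i)), (x.2, fun i => x.1 i - x.2 i)⟩)
    (fun y => ⟨fun i => y.2.1 i + y.2.2 i, y.2.1⟩) ?_ ?_ ?_ ?_ ?_
  · rintro ⟨c, b⟩ hx
    simp only [Finset.mem_sigma, mem_finAntidiagonal, Fintype.mem_piFinset, mem_range,
      Nat.lt_succ_iff] at hx
    simp only [Finset.mem_sigma, Finset.HasAntidiagonal.mem_antidiagonal, Finset.mem_product, mem_finAntidiagonal]
    refine ⟨?_, trivial, trivial⟩
    rw [← Finset.sum_add_distrib, ← hx.1]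
    exact Finset.sum_congr rfl fun i _ => Nat.add_sub_cancel' (hx.2 i)
  · rintro ⟨q, b, e⟩ hy
    simp only [Finset.mem_sigma, Finset.HasAntidiagonal.mem_antidiagonal, Finset.mem_product,
      mem_finAntidiagonal] at hy
    simp only [Finset.mem_sigma, mem_finAntidiagonal, Fintype.mem_piFinset, mem_range,
      Nat.lt_succ_iff]
    refine ⟨?_, fun i => Nat.le_add_right _ _⟩
    rw [Finset.sum_add_distrib, hy.2.1, hy.2.2, hy.1]
  · rintro ⟨c, b⟩ hx
    simp only [Finset.mem_sigma, mem_finAntidiagonal, Fintype.mem_piFinset, mem_range,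
      Nat.lt_succ_iff] at hx
    have hc : (fun i => b i + (c i - b i)) = c :=
      funext fun i => Nat.add_sub_cancel' (hx.2 i)
    simp only [hc]
  · rintro ⟨q, b, e⟩ hy
    simp only [Finset.mem_sigma, Finset.HasAntidiagonal.mem_antidiagonal, Finset.mem_product,
      mem_finAntidiagonal] at hy
    have h1 : (fun i => b i + e i - b i) = e := funext fun i => by omega
    simp only [Nat.add_sub_cancel_left, h1, Sigma.mk.inj_iff, heq_eq_eq, and_true,
      Prod.mk.injEq]
    rw [hy.2.1, hy.2.2]
  · rintro ⟨c, b⟩ _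
    rfl

lemma finAntidiagonal_fin_zero (δ : ℕ) :
    finAntidiagonal 0 δ = if δ = 0 then ({fun i => i.elim0} : Finset (Fin 0 → ℕ)) else ∅ := by
  split_ifs with h
  · subst h
    ext f
    simp only [mem_finAntidiagonal, Finset.mem_singleton, Finset.univ_eq_empty,
      Finset.sum_empty, true_iff]
    exact funext fun i => i.elim0
  · ext f
    simp only [mem_finAntidiagonal, Finset.notMem_empty, iff_false, Finset.univ_eq_empty,
      Finset.sum_empty]
    omega

lemma W_fin_zero {R : Type*} [CommSemiring R] (δ : ℕ) (x : Fin 0 → R) :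
    W 0 δ x = if δ = 0 then 1 else 0 := by
  rw [W_eq, finAntidiagonal_fin_zero]
  split_ifs <;> simp

theorem stmt5 {R : Type*} [CommRing R] (k : ℕ) (d : Fin k → R) (p : ℕ) :
    W k p (fun i => d i - 1) =
      ∑ i ∈ Finset.range (p + 1),
        (-1) ^ (p - i) * ((k + p - 1).choose (p - i) : R) * W k i d := by
  rcases k with _ | K
  · -- k = 0
    simp only [W_fin_zero]
    rw [Finset.sum_eq_single 0 (fun i _ hi => by simp [hi]) (by simp)]
    rcases p with _ | p
    · simp
    · simp only [Nat.succ_ne_zero, if_false, if_pos rfl, Nat.sub_zero, mul_one]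
      rw [Nat.zero_add, Nat.add_sub_cancel, Nat.choose_eq_zero_of_lt (by omega)]
      simp
  · -- k = K + 1
    have hk1 : (K + 1) + p - 1 = K + p := by omega
    rw [hk1, W_eq]
    have h1 : ∀ c ∈ finAntidiagonal (K + 1) p,
        (∏ i, (fun i => d i - 1) i ^ c i)
          = ∑ b ∈ Fintype.piFinset (fun i => range (c i + 1)),
              ∏ i, (d i ^ b i * (-1 : R) ^ (c i - b i) * ((c i).choose (b i) : R)) := by
      intro c _
      rw [← Finset.prod_univ_sum (fun i => range (c i + 1))
        (fun i j => d i ^ j * (-1 : R) ^ (c i - j) * ((c i).choose j : R))]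
      exact Finset.prod_congr rfl fun i _ => by
        show (d i - 1) ^ c i = _
        rw [sub_eq_add_neg, add_pow]
    rw [Finset.sum_congr rfl h1]
    have h2 : ∀ c ∈ finAntidiagonal (K + 1) p,
        (∑ b ∈ Fintype.piFinset (fun i => range (c i + 1)),
            ∏ i, (d i ^ b i * (-1 : R) ^ (c i - b i) * ((c i).choose (b i) : R)))
          = ∑ b ∈ Fintype.piFinset (fun i => range (c i + 1)),
              (fun b e => ∏ i, (d i ^ b i * (-1 : R) ^ (e i) * ((b i + e i).choose (b i) : R)))
                b (fun i => c i - b i) := by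
      intro c _
      refine Finset.sum_congr rfl fun b hb => ?_
      simp only
      refine Finset.prod_congr rfl fun i _ => ?_
      simp only [Fintype.mem_piFinset, mem_range, Nat.lt_succ_iff] at hb
      rw [Nat.add_sub_cancel' (hb i)]
    rw [Finset.sum_congr rfl h2, reindex (K + 1) p
      (fun b e => ∏ i, (d i ^ b i * (-1 : R) ^ (e i) * ((b i + e i).choose (b i) : R)))]
    have h3 : ∀ q ∈ antidiagonal p,
        (∑ z ∈ finAntidiagonal (K + 1) q.1 ×ˢ finAntidiagonal (K + 1) q.2,
            ∏ i, (d i ^ z.1 i * (-1 : R) ^ (z.2 i) * ((z.1 i + z.2 i).choose (z.1 i) : R)))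
          = (-1 : R) ^ q.2 * ((K + p).choose q.2 : R)
              * ∑ b ∈ finAntidiagonal (K + 1) q.1, ∏ i, d i ^ b i := by
      intro q hq
      rw [Finset.HasAntidiagonal.mem_antidiagonal] at hq
      rw [Finset.sum_product]
      have inner : ∀ b ∈ finAntidiagonal (K + 1) q.1,
          (∑ e ∈ finAntidiagonal (K + 1) q.2,
              ∏ i, (d i ^ b i * (-1 : R) ^ (e i) * ((b i + e i).choose (b i) : R)))
            = (-1 : R) ^ q.2 * ((K + p).choose q.2 : R) * ∏ i, d i ^ b i := by
        intro b hb
        rw [mem_finAntidiagonal] at hb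
        have he : ∀ e ∈ finAntidiagonal (K + 1) q.2,
            (∏ i, (d i ^ b i * (-1 : R) ^ (e i) * ((b i + e i).choose (b i) : R)))
              = (-1 : R) ^ q.2 * (∏ i, d i ^ b i)
                  * ((∏ i, (b i + e i).choose (e i) : ℕ) : R) := by
          intro e heh
          rw [mem_finAntidiagonal] at heh
          rw [Finset.prod_mul_distrib, Finset.prod_mul_distrib,
            Finset.prod_pow_eq_pow_sum, heh, Nat.cast_prod]
          have : ∀ i ∈ (univ : Finset (Fin (K + 1))),
              (((b i + e i).choose (b i) : ℕ) : R) = (((b i + e i).choose (e i) : ℕ) : R) := by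
            intro i _
            rw [Nat.choose_symm_add]
          rw [Finset.prod_congr rfl this]
          ring
        rw [Finset.sum_congr rfl he, ← Finset.mul_sum, ← Nat.cast_sum, lemmaG, hb]
        have : q.1 + K + q.2 = K + p := by omega
        rw [this]
        ring
      rw [Finset.sum_congr rfl inner, ← Finset.mul_sum]
    rw [Finset.sum_congr rfl h3, Finset.Nat.sum_antidiagonal_eq_sum_range_succ_mk]
    refine Finset.sum_congr rfl fun i hi => ?_
    rw [W_eq]
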